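/- The elements of the first block of the sequence (Q_n) satisfy the symmetry relation Q_m = Q_{τ−m} for all 0 ≤ m ≤ τ. -/

import Mathlib

theorem stmt_5
    (N : ℕ) (hN : 0 < N) (hNsq : ¬ IsSquare N)
    (a P Q : ℤ → ℤ)
    (hP0 : P 0 = 0) (hQ0 : Q 0 = 1)
    (ha : ∀ m : ℤ, 0 ≤ m → a m = ⌊((P m : ℝ) + Real.sqrt N) / (Q m : ℝ)⌋)
    (hPrec : ∀ m : ℤ, 0 ≤ m → P (m + 1) = a m * Q m - P m)
    (hQrec : ∀ m : ℤ, 0 ≤ m → Q (m + 1) * Q m = (N : ℤ) - P (m + 1) ^ 2)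
    (τ : ℕ) (hτ : 0 < τ)
    (hper : ∀ n : ℤ, 1 ≤ n → a (n + τ) = a n)
    (hmin : ∀ τ' : ℕ, 0 < τ' → (∀ n : ℤ, 1 ≤ n → a (n + τ') = a n) → τ ≤ τ')
    :
    ∀ m : ℤ, 0 ≤ m → m ≤ (τ : ℤ) → Q m = Q ((τ : ℤ) - m) := by
  set s := Real.sqrt N with hs
  have hNge2 : 2 ≤ N := by
    have : N ≠ 1 := fun h => hNsq (h ▸ ⟨1, rfl⟩)
    omega
  have hα : Irrational s := irrational_sqrt_natCast_iff.mpr hNsq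
  have hαpos : 0 < s := Real.sqrt_pos.mpr (by positivity)
  have hα2 : s ^ 2 = (N : ℝ) := Real.sq_sqrt (by positivity)
  have hα1 : 1 < s := by
    rw [hs]
    rw [show (1:ℝ) = Real.sqrt 1 from (Real.sqrt_one).symm]
    apply Real.sqrt_lt_sqrt (by norm_num)
    exact_mod_cast hNge2.trans_lt' one_lt_two
  have hNP : ∀ p : ℤ, (N : ℤ) ≠ p ^ 2 := by
    intro p hp
    exact hNsq ⟨p.natAbs, by
      have h2 : ((p.natAbs * p.natAbs : ℕ) : ℤ) = p * p := Int.natAbs_mul_self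
      have : (N : ℤ) = ((p.natAbs * p.natAbs : ℕ) : ℤ) := by rw [h2]; linarith [sq p]
      exact_mod_cast this⟩
  have hQne : ∀ m : ℤ, 0 ≤ m → Q m ≠ 0 := by
    refine Int.le_induction ?_ ?_
    · rw [hQ0]; exact one_ne_zero
    · intro n hn ih h0
      have h := hQrec n hn
      rw [h0, zero_mul] at h
      exact hNP (P (n + 1)) (by linarith)
  have hQR : ∀ m : ℤ, 0 ≤ m → (Q m : ℝ) ≠ 0 := by
    intro m hm; exact_mod_cast hQne m hm
  have hξirr : ∀ m : ℤ, 0 ≤ m → Irrational (((P m : ℝ) + s) / (Q m : ℝ)) :=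
    fun m hm => (hα.intCast_add (P m)).div_intCast (hQne m hm)
  have hfr : ∀ m : ℤ, 0 ≤ m →
      0 < ((P m : ℝ) + s) / (Q m : ℝ) - (a m : ℝ) ∧
      ((P m : ℝ) + s) / (Q m : ℝ) - (a m : ℝ) < 1 := by
    intro m hm
    rw [ha m hm]
    have h1 := Int.floor_le (((P m : ℝ) + s) / (Q m : ℝ))
    have h2 := Int.lt_floor_add_one (((P m : ℝ) + s) / (Q m : ℝ))
    have h3 : ((P m : ℝ) + s) / (Q m : ℝ) ≠ (⌊((P m : ℝ) + s) / (Q m : ℝ)⌋ : ℝ) :=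
      (hξirr m hm).ne_int _
    constructor
    · cases h1.lt_or_eq with
      | inl h => linarith
      | inr h => exact absurd h.symm h3
    · linarith
  have hmul : ∀ m : ℤ, 0 ≤ m →
      (((P m : ℝ) + s) / (Q m : ℝ) - (a m : ℝ)) *
        (((P (m + 1) : ℝ) + s) / (Q (m + 1) : ℝ)) = 1 := by
    intro m hm
    have hq : (Q (m+1) : ℝ) * (Q m : ℝ) = (N : ℝ) - (P (m+1) : ℝ)^2 := by
      exact_mod_cast hQrec m hm
    have hp : (P (m+1) : ℝ) = (a m : ℝ) * (Q m : ℝ) - (P m : ℝ) := by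
      exact_mod_cast hPrec m hm
    have hQm := hQR m hm
    have hQm1 := hQR (m+1) (by omega)
    field_simp
    linear_combination ((P (m+1) : ℝ) + s) * hp + hα2 - hq
  have hmulc : ∀ m : ℤ, 0 ≤ m →
      (((P m : ℝ) - s) / (Q m : ℝ) - (a m : ℝ)) *
        (((P (m + 1) : ℝ) - s) / (Q (m + 1) : ℝ)) = 1 := by
    intro m hm
    have hq : (Q (m+1) : ℝ) * (Q m : ℝ) = (N : ℝ) - (P (m+1) : ℝ)^2 := by
      exact_mod_cast hQrec m hm
    have hp : (P (m+1) : ℝ) = (a m : ℝ) * (Q m : ℝ) - (P m : ℝ) := by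
      exact_mod_cast hPrec m hm
    have hQm := hQR m hm
    have hQm1 := hQR (m+1) (by omega)
    field_simp
    linear_combination ((P (m+1) : ℝ) - s) * hp + hα2 - hq
  have ha0 : a 0 = ⌊s⌋ := by
    rw [ha 0 le_rfl, hP0, hQ0]; norm_num
  have ha0ge1 : 1 ≤ a 0 := by
    rw [ha0]; exact Int.le_floor.mpr (by exact_mod_cast hα1.le)
  have hstep2 : ∀ m : ℤ, 0 ≤ m → ((P m : ℝ) - s) / (Q m : ℝ) - (a m : ℝ) < -1 →
      (1 < ((P (m+1) : ℝ) + s) / (Q (m+1) : ℝ) ∧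
        (-1 < ((P (m+1) : ℝ) - s) / (Q (m+1) : ℝ) ∧
          ((P (m+1) : ℝ) - s) / (Q (m+1) : ℝ) < 0)) := by
    intro m hm hcm
    obtain ⟨hf0, hf1⟩ := hfr m hm
    have h1 := hmul m hm
    have h2 := hmulc m hm
    set x := ((P m : ℝ) + s) / (Q m : ℝ) - (a m : ℝ)
    set y := ((P (m+1) : ℝ) + s) / (Q (m+1) : ℝ)
    set u := ((P m : ℝ) - s) / (Q m : ℝ) - (a m : ℝ)
    set v := ((P (m+1) : ℝ) - s) / (Q (m+1) : ℝ)
    refine ⟨?_, ?_, ?_⟩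
    · nlinarith [h1, hf0, hf1]
    · nlinarith [h2, hcm]
    · nlinarith [h2, hcm]
  have hred : ∀ m : ℤ, 1 ≤ m →
      (1 < ((P m : ℝ) + s) / (Q m : ℝ) ∧
        (-1 < ((P m : ℝ) - s) / (Q m : ℝ) ∧ ((P m : ℝ) - s) / (Q m : ℝ) < 0)) := by
    refine Int.le_induction ?_ ?_
    · have h := hstep2 0 le_rfl (by
        rw [hP0, hQ0]
        push_cast
        have : (1:ℝ) ≤ (a 0 : ℝ) := by exact_mod_cast ha0ge1
        nlinarith [hαpos])
      norm_num at h ⊢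
      exact h
    · intro n hn ih
      have ham : 1 ≤ a n := by
        rw [ha n (by omega)]
        exact Int.le_floor.mpr (by exact_mod_cast ih.1.le)
      have hamR : (1:ℝ) ≤ (a n : ℝ) := by exact_mod_cast ham
      exact hstep2 n (by omega) (by nlinarith [ih.2.1, ih.2.2])
  have ha1 : ∀ m : ℤ, 0 ≤ m → 1 ≤ a m := by
    intro m hm
    rcases eq_or_lt_of_le hm with h | h
    · rw [← h]; exact ha0ge1
    · rw [ha m hm]
      exact Int.le_floor.mpr (by exact_mod_cast (hred m h).1.le)
  have hstr : ∀ (k : ℤ), 1 ≤ k → ∀ (n : ℕ),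
      GenContFract.IntFractPair.stream (((P k : ℝ) + s) / (Q k : ℝ)) n =
      some ⟨a (k + n), Int.fract (((P (k + n) : ℝ) + s) / (Q (k + n) : ℝ))⟩ := by
    intro k hk n
    induction n with
    | zero =>
      simp only [Nat.cast_zero, add_zero, GenContFract.IntFractPair.stream_zero]
      have h : a k = ⌊((P k : ℝ) + s) / (Q k : ℝ)⌋ := ha k (by omega)
      simp [GenContFract.IntFractPair.of, h]
    | succ n ih =>
      have hm0 : (0:ℤ) ≤ k + n := by omega
      have hfrac_eq : Int.fract (((P (k+n) : ℝ) + s) / (Q (k+n) : ℝ)) =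
          ((P (k+n) : ℝ) + s) / (Q (k+n) : ℝ) - (a (k+n) : ℝ) := by
        rw [Int.fract, ← ha (k+n) hm0]
      have hne : Int.fract (((P (k+n):ℝ)+s)/(Q (k+n):ℝ)) ≠ 0 := by
        rw [hfrac_eq]; exact ne_of_gt (hfr (k+n) hm0).1
      rw [GenContFract.IntFractPair.stream_succ_of_some ih hne]
      have hinv : (Int.fract (((P (k+n):ℝ)+s)/(Q (k+n):ℝ)))⁻¹ =
          ((P (k+n+1) : ℝ) + s) / (Q (k+n+1) : ℝ) := by
        rw [hfrac_eq]
        exact inv_eq_of_mul_eq_one_right (hmul (k+n) hm0)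
      rw [hinv]
      have h : a (k+n+1) = ⌊((P (k+n+1) : ℝ) + s) / (Q (k+n+1) : ℝ)⌋ := ha _ (by omega)
      simp only [Nat.cast_add, Nat.cast_one, ← add_assoc]
      simp [GenContFract.IntFractPair.of, h]
  have hofeq : GenContFract.of (((P 1 : ℝ) + s) / (Q 1 : ℝ)) =
      GenContFract.of (((P (1+(τ:ℤ)) : ℝ) + s) / (Q (1+(τ:ℤ)) : ℝ)) := by
    have hτ1 : (1:ℤ) ≤ 1 + (τ:ℤ) := by omega
    apply GenContFract.ext
    · rw [GenContFract.of_h_eq_floor, GenContFract.of_h_eq_floor,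
        ← ha 1 (by omega), ← ha (1+(τ:ℤ)) (by omega)]
      exact_mod_cast (hper 1 le_rfl).symm
    · apply Stream'.Seq.ext
      intro n
      rw [GenContFract.get?_of_eq_some_of_succ_get?_intFractPair_stream (hstr 1 le_rfl (n+1)),
          GenContFract.get?_of_eq_some_of_succ_get?_intFractPair_stream (hstr (1+(τ:ℤ)) hτ1 (n+1))]
      have hpn := hper (1 + ((n+1 : ℕ) : ℤ)) (by omega)
      rw [show (1:ℤ)+(τ:ℤ)+((n+1:ℕ):ℤ) = 1+((n+1:ℕ):ℤ)+(τ:ℤ) from by ring, hpn]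
  have hξeq : ((P (1+(τ:ℤ)) : ℝ) + s) / (Q (1+(τ:ℤ)) : ℝ) = ((P 1 : ℝ) + s) / (Q 1 : ℝ) := by
    have h1 := GenContFract.of_convergence (K := ℝ) (((P 1 : ℝ) + s) / (Q 1 : ℝ))
    have h2 := GenContFract.of_convergence (K := ℝ)
      (((P (1+(τ:ℤ)) : ℝ) + s) / (Q (1+(τ:ℤ)) : ℝ))
    rw [← hofeq] at h2
    exact tendsto_nhds_unique h2 h1
  have hPQuniq : ∀ p q p' q' : ℤ, q ≠ 0 → q' ≠ 0 →
      ((p:ℝ) + s) / (q:ℝ) = ((p':ℝ) + s) / (q':ℝ) → p = p' ∧ q = q' := by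
    intro p q p' q' hq hq' h
    have hqR : (q:ℝ) ≠ 0 := by exact_mod_cast hq
    have hq'R : (q':ℝ) ≠ 0 := by exact_mod_cast hq'
    rw [div_eq_div_iff hqR hq'R] at h
    have hqq : q = q' := by
      by_contra hne
      apply hα
      refine ⟨((p' * q - p * q' : ℤ) : ℚ) / ((q' - q : ℤ) : ℚ), ?_⟩
      have hd : ((q' - q : ℤ) : ℝ) ≠ 0 := by
        intro h0
        apply hne
        have : (q' - q : ℤ) = 0 := by exact_mod_cast h0
        omega
      push_cast at hd ⊢
      rw [div_eq_iff hd]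
      linear_combination -h
    constructor
    · rw [hqq] at h
      have h2 := mul_right_cancel₀ hq'R h
      have : (p:ℝ) = (p':ℝ) := by linarith
      exact_mod_cast this
    · exact hqq
  have hper1 := hPQuniq (P (1+(τ:ℤ))) (Q (1+(τ:ℤ))) (P 1) (Q 1)
    (hQne _ (by omega)) (hQne 1 (by omega)) hξeq
  have hperPQ : ∀ n : ℤ, 1 ≤ n → P (n + (τ:ℤ)) = P n ∧ Q (n + (τ:ℤ)) = Q n := by
    refine Int.le_induction ?_ ?_
    · exact hper1
    · intro n hn ih
      have h0n : (0:ℤ) ≤ n := by omega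
      have h0nτ : (0:ℤ) ≤ n + τ := by omega
      have e1 : n + 1 + (τ:ℤ) = (n + (τ:ℤ)) + 1 := by ring
      have hP' : P (n + (τ:ℤ) + 1) = P (n+1) := by
        rw [hPrec (n+τ) h0nτ, hper n hn, ih.1, ih.2, hPrec n h0n]
      have hQ' : Q (n + (τ:ℤ) + 1) = Q (n+1) := by
        have h1 := hQrec (n+τ) h0nτ
        have h2 := hQrec n h0n
        rw [hP', ih.2] at h1
        exact mul_right_cancel₀ (hQne n h0n) (h1.trans h2.symm)
      exact ⟨by rw [e1, hP'], by rw [e1, hQ']⟩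
  have hP1a0 : P 1 = a 0 := by
    have h := hPrec 0 le_rfl
    rw [hP0, hQ0] at h
    simpa using h
  have hPτ1 : P ((τ:ℤ)+1) = a 0 := by
    have h := (hperPQ 1 le_rfl).1
    rw [add_comm] at h
    rw [h, hP1a0]
  have hQτ1Q1 : Q ((τ:ℤ)+1) = Q 1 := by
    have h := (hperPQ 1 le_rfl).2
    rwa [add_comm] at h
  have hQτ : Q (τ:ℤ) = 1 := by
    have h1 := hQrec (τ:ℤ) (by omega)
    have h0' := hQrec 0 le_rfl
    norm_num [hQ0] at h0'
    rw [hQτ1Q1, hPτ1, ← hP1a0] at h1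
    have h2 : Q 1 * Q (τ:ℤ) = Q 1 * 1 := by rw [mul_one, h1, h0']
    exact mul_left_cancel₀ (hQne 1 (by omega)) h2
  have hηrecmul : ∀ k : ℤ, 1 ≤ k →
      (((P (k+1):ℝ)+s)/(Q k:ℝ) - (a k:ℝ)) * (((P k:ℝ)+s)/(Q (k-1):ℝ)) = 1 := by
    intro k hk
    have hq0 := hQrec (k-1) (by omega)
    rw [show k-1+1 = k from by ring] at hq0
    have hq : (Q k : ℝ) * (Q (k-1) : ℝ) = (N : ℝ) - (P k : ℝ)^2 := by exact_mod_cast hq0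
    have hp : (P (k+1) : ℝ) = (a k : ℝ) * (Q k : ℝ) - (P k : ℝ) := by
      exact_mod_cast hPrec k (by omega)
    have h1 := hQR k (by omega)
    have h2 := hQR (k-1) (by omega)
    field_simp
    linear_combination ((P k:ℝ)+s) * hp + hα2 - hq
  have hηconj : ∀ k : ℤ, 1 ≤ k →
      (((P k:ℝ)+s)/(Q (k-1):ℝ)) * (((P k:ℝ)-s)/(Q k:ℝ)) = -1 := by
    intro k hk
    have hq0 := hQrec (k-1) (by omega)
    rw [show k-1+1 = k from by ring] at hq0
    have hq : (Q k : ℝ) * (Q (k-1) : ℝ) = (N : ℝ) - (P k : ℝ)^2 := by exact_mod_cast hq0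
    have h1 := hQR k (by omega)
    have h2 := hQR (k-1) (by omega)
    field_simp
    linear_combination hq - hα2
  have hηgt1 : ∀ k : ℤ, 1 ≤ k → 1 < ((P k:ℝ)+s)/(Q (k-1):ℝ) := by
    intro k hk
    obtain ⟨h1, h2, h3⟩ := hred k hk
    have hc := hηconj k hk
    nlinarith [hc, h2, h3]
  have hηfl : ∀ k : ℤ, 1 ≤ k → a k = ⌊((P (k+1):ℝ)+s)/(Q k:ℝ)⌋ := by
    intro k hk
    have h1 := hηrecmul k hk
    have hg := hηgt1 k hk
    have h3 : 0 < ((P (k+1):ℝ)+s)/(Q k:ℝ) - (a k:ℝ) := by nlinarith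
    have h4 : ((P (k+1):ℝ)+s)/(Q k:ℝ) - (a k:ℝ) < 1 := by nlinarith
    exact (Int.floor_eq_iff.mpr ⟨by linarith, by push_cast; linarith⟩).symm
  have hη_top : ((P ((τ:ℤ)+1):ℝ)+s)/(Q (τ:ℤ):ℝ) = (a 0:ℝ) + s := by
    rw [hPτ1, hQτ]
    norm_num
  have haτ : a (τ:ℤ) = 2 * a 0 := by
    have h := hηfl (τ:ℤ) (by omega)
    rw [hη_top] at h
    rw [h, Int.floor_intCast_add, ← ha0]
    ring
  have hmul0 : (s - (a 0:ℝ)) * (((P 1:ℝ)+s)/(Q 1:ℝ)) = 1 := by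
    have h := hmul 0 le_rfl
    rw [hP0, hQ0] at h
    norm_num at h
    linear_combination h
  have chain : ∀ m : ℤ, 1 ≤ m → m ≤ (τ:ℤ) →
      ((P m:ℝ)+s)/(Q m:ℝ) = ((P ((τ:ℤ)+1-m):ℝ)+s)/(Q ((τ:ℤ)-m):ℝ) := by
    refine Int.le_induction ?_ ?_
    · intro _
      rw [show (τ:ℤ)+1-1 = (τ:ℤ) from by ring]
      have h2 := hηrecmul (τ:ℤ) (by omega)
      rw [hη_top, haτ] at h2
      push_cast at h2
      have hw : s - (a 0:ℝ) ≠ 0 := by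
        intro h0
        rw [h0, zero_mul] at hmul0
        exact one_ne_zero hmul0.symm
      apply mul_left_cancel₀ hw
      rw [hmul0]
      linear_combination -h2
    · intro n hn ih hn1
      have ihh := ih (by omega)
      have hfl : a n = a ((τ:ℤ)-n) := by
        rw [ha n (by omega), ihh, show (τ:ℤ)+1-n = ((τ:ℤ)-n)+1 from by ring]
        exact (hηfl ((τ:ℤ)-n) (by omega)).symm
      have h1 := hmul n (by omega)
      have h2 := hηrecmul ((τ:ℤ)-n) (by omega)
      rw [show ((τ:ℤ)-n)+1 = (τ:ℤ)+1-n from by ring, ← ihh, ← hfl] at h2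
      have hne0 : ((P n:ℝ)+s)/(Q n:ℝ) - (a n:ℝ) ≠ 0 := ne_of_gt (hfr n (by omega)).1
      have hgoal := mul_left_cancel₀ hne0 (h1.trans h2.symm)
      rw [show (τ:ℤ)+1-(n+1) = (τ:ℤ)-n from by ring,
        show (τ:ℤ)-(n+1) = (τ:ℤ)-n-1 from by ring]
      exact hgoal
  intro m hm0 hmτ
  rcases eq_or_lt_of_le hm0 with h0 | h0
  · rw [← h0, sub_zero, hQ0, hQτ]
  · have h := chain m (by omega) hmτ
    exact (hPQuniq (P m) (Q m) (P ((τ:ℤ)+1-m)) (Q ((τ:ℤ)-m))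
      (hQne m hm0) (hQne _ (by omega)) h).2
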